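/- The angular numerical range W'(C) = {x* C x : x ∈ ℂⁿ, x ≠ 0} of any square complex matrix C is a convex cone in ℂ. -/
import Mathlib


open Matrix Complex Real

noncomputable section

/-- The numerical range (field of values) of a square complex matrix. -/
def numRange {ι : Type*} [Fintype ι] (C : Matrix ι ι ℂ) : Set ℂ :=
  {z | ∃ x : ι → ℂ, star x ⬝ᵥ x = 1 ∧ z = star x ⬝ᵥ C.mulVec x}

/-- A matrix is sectorial if 0 is not in its numerical range. -/
def Sectorial {ι : Type*} [Fintype ι] (C : Matrix ι ι ℂ) : Prop := (0 : ℂ) ∉ numRange C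

/-- A matrix is semi-sectorial if its numerical range lies in a closed half-plane
through the origin. -/
def SemiSectorial {ι : Type*} [Fintype ι] (C : Matrix ι ι ℂ) : Prop :=
  ∃ θ : ℝ, ∀ x : ι → ℂ, 0 ≤ (Complex.exp (-(θ : ℂ) * Complex.I) * (star x ⬝ᵥ C.mulVec x)).re

/-- A matrix is quasi-sectorial if it is unitarily similar to `diag(0, Cs)` with `Cs`
sectorial (equivalently, its angular numerical range is a salient cone of angle `< π`). -/
def QuasiSectorial {ι : Type*} [Fintype ι] [DecidableEq ι] (C : Matrix ι ι ℂ) : Prop :=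
  ∃ (k r : ℕ) (e : (Fin k ⊕ Fin r) ≃ ι) (U : Matrix ι ι ℂ) (Cs : Matrix (Fin r) (Fin r) ℂ),
    Uᴴ * U = 1 ∧ U * Uᴴ = 1 ∧ Sectorial Cs ∧
    C = U * (Matrix.reindex e e (Matrix.fromBlocks 0 0 0 Cs)) * Uᴴ

/-- The canonical middle factor of the generalized sectorial decomposition:
`diag(0_{n0}, diag(e^{jθ_1},…,e^{jθ_m}), E)` where `E` consists of `p` copies of the
`2×2` block `e^{jθ0} [[1,2],[0,1]]`. -/
def gsdMat (n0 m p : ℕ) (θ : Fin m → ℝ) (θ0 : ℝ) :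
    Matrix ((Fin n0 ⊕ Fin m) ⊕ (Fin 2 × Fin p)) ((Fin n0 ⊕ Fin m) ⊕ (Fin 2 × Fin p)) ℂ :=
  Matrix.fromBlocks
    (Matrix.fromBlocks 0 0 0 (Matrix.diagonal fun i => Complex.exp ((θ i : ℂ) * Complex.I)))
    0 0
    (Matrix.blockDiagonal fun _ : Fin p => Complex.exp ((θ0 : ℂ) * Complex.I) • (!![1, 2; 0, 1] : Matrix (Fin 2) (Fin 2) ℂ))

/-- `HasPhases C φ` says that `φ` (nonincreasing, of length `r = rank C`) is a vector of
phases of the semi-sectorial matrix `C`, arising from a generalized sectorial decomposition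
`C = Tᴴ (diag(0, D, E)) T`: the entries of `φ` are the angles `θ_1 ≥ … ≥ θ_m` of `D`
together with `p` copies of each of `θ0 ± π/2`. -/
def HasPhases {ι : Type*} [Fintype ι] [DecidableEq ι] (C : Matrix ι ι ℂ) {r : ℕ}
    (φ : Fin r → ℝ) : Prop :=
  Antitone φ ∧
  ∃ (n0 m p : ℕ) (θ : Fin m → ℝ) (θ0 : ℝ)
    (e : ((Fin n0 ⊕ Fin m) ⊕ (Fin 2 × Fin p)) ≃ ι) (T : Matrix ι ι ℂ),
    IsUnit T.det ∧
    (∀ i, θ0 - π/2 ≤ θ i ∧ θ i ≤ θ0 + π/2) ∧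
    C = Tᴴ * (Matrix.reindex e e (gsdMat n0 m p θ θ0)) * T ∧
    Multiset.map φ Finset.univ.val =
      Multiset.map θ Finset.univ.val + Multiset.replicate p (θ0 + π/2)
        + Multiset.replicate p (θ0 - π/2)

/-- `B` is the Moore–Penrose pseudoinverse of `A`. -/
def IsMoorePenrose {k l : Type*} [Fintype k] [Fintype l]
    (A : Matrix k l ℂ) (B : Matrix l k ℂ) : Prop :=
  A * B * A = A ∧ B * A * B = B ∧ (A * B)ᴴ = A * B ∧ (B * A)ᴴ = B * A

/-- `Majorized x y` : the real vector `x` is majorized by `y`. -/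
def Majorized {r : ℕ} (x y : Fin r → ℝ) : Prop :=
  (∀ A : Finset (Fin r), ∃ B : Finset (Fin r), B.card = A.card ∧ ∑ i ∈ A, x i ≤ ∑ i ∈ B, y i)
  ∧ ∑ i, x i = ∑ i, y i


/-- The angular numerical range (angular field of values) of a square complex matrix. -/
def angularNumRange {ι : Type*} [Fintype ι] (C : Matrix ι ι ℂ) : Set ℂ :=
  {z | ∃ x : ι → ℂ, x ≠ 0 ∧ z = star x ⬝ᵥ C.mulVec x}


private lemma q_expand {n : ℕ} (C : Matrix (Fin n) (Fin n) ℂ) (x y : Fin n → ℂ) (c : ℂ) :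
    star (x + c • y) ⬝ᵥ C.mulVec (x + c • y) =
      star x ⬝ᵥ C.mulVec x + star c * c * (star y ⬝ᵥ C.mulVec y)
      + c * (star x ⬝ᵥ C.mulVec y) + star c * (star y ⬝ᵥ C.mulVec x) := by
  simp [star_add, star_smul, Matrix.mulVec_add, Matrix.mulVec_smul, add_dotProduct,
    dotProduct_add, smul_dotProduct, dotProduct_smul, smul_eq_mul]
  ring

private lemma q_smul {n : ℕ} (C : Matrix (Fin n) (Fin n) ℂ) (x : Fin n → ℂ) (c : ℂ) :
    star (c • x) ⬝ᵥ C.mulVec (c • x) = star c * c * (star x ⬝ᵥ C.mulVec x) := by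
  simp [star_smul, Matrix.mulVec_smul, smul_dotProduct, dotProduct_smul, smul_eq_mul]
  ring

private lemma exists_phase (a b d : ℂ) (hd : d ≠ 0) :
    ∃ (φ μ : ℝ), 0 ≤ μ ∧
      Complex.exp (φ * Complex.I) * a + Complex.exp (-(φ * Complex.I)) * b = (μ : ℂ) * d := by
  set h : ℝ → ℂ := fun φ => Complex.exp (φ * Complex.I) * a + Complex.exp (-(φ * Complex.I)) * b
    with hh
  have hnegC : ∀ φ : ℝ, h (φ + π) = - h φ := by
    intro φ
    have h1 : Complex.exp ((↑(φ + π)) * Complex.I) = - Complex.exp (φ * Complex.I) := by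
      push_cast
      rw [add_mul, Complex.exp_add, Complex.exp_pi_mul_I]
      ring
    have h2 : Complex.exp (-((↑(φ + π)) * Complex.I)) = - Complex.exp (-(↑φ * Complex.I)) := by
      rw [Complex.exp_neg, Complex.exp_neg, h1]
      rw [neg_inv]
    simp only [hh, h1, h2]
    ring
  set f : ℝ → ℝ := fun φ => (h φ * (starRingEnd ℂ) d).im with hf
  have hcont : Continuous f := by fun_prop
  have hfneg : f π = - f 0 := by
    have := hnegC 0
    rw [zero_add] at this
    simp only [hf, this, neg_mul, Complex.neg_im]
  have h0mem : (0 : ℝ) ∈ Set.uIcc (f 0) (f π) := by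
    rw [hfneg, Set.mem_uIcc]
    rcases le_total (f 0) 0 with h | h
    · exact Or.inl ⟨h, by linarith⟩
    · exact Or.inr ⟨by linarith, h⟩
  obtain ⟨φ₀, -, hφ₀⟩ := intermediate_value_uIcc (hcont.continuousOn (s := Set.uIcc 0 π)) h0mem
  -- h φ₀ * conj d is real
  have hc : h φ₀ * (starRingEnd ℂ) d = ((h φ₀ * (starRingEnd ℂ) d).re : ℂ) :=
    Complex.ext (by simp) (by simpa [hf] using hφ₀)
  set r : ℝ := (h φ₀ * (starRingEnd ℂ) d).re
  have hnsq : (Complex.normSq d : ℂ) ≠ 0 := by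
    simpa [Complex.normSq_eq_zero] using hd
  have key : h φ₀ = ((r / Complex.normSq d : ℝ) : ℂ) * d := by
    have hmul : h φ₀ * ((starRingEnd ℂ) d * d) = (r : ℂ) * d := by
      rw [← mul_assoc, hc]
    rw [mul_comm ((starRingEnd ℂ) d) d, Complex.mul_conj] at hmul
    rw [Complex.ofReal_div]
    field_simp
    linear_combination hmul
  rcases le_or_gt 0 (r / Complex.normSq d) with hr | hr
  · exact ⟨φ₀, r / Complex.normSq d, hr, key⟩
  · refine ⟨φ₀ + π, -(r / Complex.normSq d), by linarith, ?_⟩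
    show h (φ₀ + π) = _
    rw [hnegC φ₀, key]
    push_cast
    ring

private lemma conj_exp_phi (φ : ℝ) : star (Complex.exp (φ * Complex.I)) = Complex.exp (-(φ * Complex.I)) := by
  rw [Complex.star_def, ← Complex.exp_conj, _root_.map_mul, Complex.conj_ofReal, Complex.conj_I]
  ring_nf

private lemma exp_mul_exp_neg (φ : ℝ) :
    Complex.exp (-(φ * Complex.I)) * Complex.exp (φ * Complex.I) = 1 := by
  rw [← Complex.exp_add]; simp

/-- the angular numerical range of any square complex matrix is a convex cone:
it is closed under addition and under multiplication by positive real scalars. -/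
theorem angularNumRange_convexCone {n : ℕ} (C : Matrix (Fin n) (Fin n) ℂ) :
    (∀ z ∈ angularNumRange C, ∀ w ∈ angularNumRange C, z + w ∈ angularNumRange C) ∧
    (∀ z ∈ angularNumRange C, ∀ c : ℝ, 0 < c → (c : ℂ) * z ∈ angularNumRange C) := by
  constructor
  · rintro z ⟨x, hx, rfl⟩ w ⟨y, hy, rfl⟩
    set z := star x ⬝ᵥ C.mulVec x with hz
    set w := star y ⬝ᵥ C.mulVec y with hw
    by_cases hz0 : z = 0
    · exact ⟨y, hy, by rw [hz0, zero_add]⟩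
    by_cases hw0 : w = 0
    · exact ⟨x, hx, by rw [hw0, add_zero]⟩
    set a := star x ⬝ᵥ C.mulVec y with ha
    set b := star y ⬝ᵥ C.mulVec x with hb
    by_cases hzw : z + w = 0
    · -- degenerate direction case: z + w = 0
      obtain ⟨φ, μ, hμ, hph⟩ := exists_phase a b z hz0
      set t : ℝ := (μ + Real.sqrt (μ^2 + 4)) / 2 with ht
      have hsq : Real.sqrt (μ^2+4) ^ 2 = μ^2 + 4 := Real.sq_sqrt (by positivity)
      have hsqt : Real.sqrt (μ^2+4) ≥ 2 := by
        nlinarith [Real.sqrt_nonneg (μ^2+4)]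
      have htpos : 0 < t := by rw [ht]; nlinarith
      have htq : t ^ 2 = μ * t + 1 := by rw [ht]; nlinarith
      have htqC : (t:ℂ) ^ 2 = (μ:ℂ) * (t:ℂ) + 1 := by exact_mod_cast htq
      set c : ℂ := (t : ℂ) * Complex.exp (φ * Complex.I) with hc
      have hstarc : star c = (t:ℂ) * Complex.exp (-(φ * Complex.I)) := by
        rw [hc, star_mul', conj_exp_phi, Complex.star_def, Complex.conj_ofReal]
      have hcc : star c * c = ((t:ℂ))^2 := by
        rw [hstarc, hc, mul_mul_mul_comm, exp_mul_exp_neg, mul_one, sq]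
      refine ⟨x + c • y, ?_, ?_⟩
      · intro h
        have hxy : x = (-c) • y := by rw [neg_smul]; exact eq_neg_of_add_eq_zero_left h
        have h1 : z = (t:ℂ)^2 * w := by
          rw [hz, hxy, q_smul, star_neg, neg_mul_neg, ← hw, hcc]
        have hwz : w = -z := eq_neg_of_add_eq_zero_right hzw
        rw [hwz] at h1
        have h2 : (1 + (t:ℂ)^2) * z = 0 := by linear_combination h1
        have h3 : (1 + (t:ℂ)^2) ≠ 0 := by
          have : (1 + (t:ℂ)^2) = ((1 + t^2 : ℝ) : ℂ) := by push_cast; ring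
          rw [this]
          exact_mod_cast (by positivity : (0:ℝ) < 1 + t^2).ne'
        exact hz0 ((mul_eq_zero.mp h2).resolve_left h3)
      · rw [q_expand, hcc, hstarc, hc, ← hz, ← hw, ← ha, ← hb]
        linear_combination (-(t:ℂ)) * hph - w * htqC - ((μ:ℂ) * (t:ℂ)) * hzw
    · -- main case: z + w ≠ 0
      obtain ⟨φ, μ, hμ, hph⟩ := exists_phase a b (z + w) hzw
      set c : ℂ := Complex.exp (φ * Complex.I) with hc
      have hstarc : star c = Complex.exp (-(φ * Complex.I)) := conj_exp_phi φ
      have hcc : star c * c = 1 := by rw [hstarc, hc, exp_mul_exp_neg]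
      have h1 : star (x + c • y) ⬝ᵥ C.mulVec (x + c • y) = (1 + (μ:ℂ)) * (z + w) := by
        rw [q_expand, hcc, hstarc, hc, ← hz, ← hw, ← ha, ← hb]
        linear_combination hph
      have h1μ : (0:ℝ) < 1 + μ := by linarith
      have hu0 : x + c • y ≠ 0 := by
        intro h
        rw [h] at h1
        simp only [star_zero, Matrix.mulVec_zero, dotProduct_zero] at h1
        exact hzw (by
          have h3 : (1 + (μ:ℂ)) ≠ 0 := by exact_mod_cast h1μ.ne'
          have := mul_eq_zero.mp h1.symm
          exact this.resolve_left h3)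
      set s : ℝ := (Real.sqrt (1 + μ))⁻¹ with hs
      have hspos : 0 < s := by
        rw [hs]
        exact inv_pos.mpr (Real.sqrt_pos.mpr h1μ)
      have hs2 : (s:ℂ)^2 * (1 + (μ:ℂ)) = 1 := by
        have : s^2 * (1 + μ) = 1 := by
          rw [hs, inv_pow, Real.sq_sqrt h1μ.le]
          field_simp
        calc (s:ℂ)^2 * (1 + (μ:ℂ)) = ((s^2 * (1+μ) : ℝ) : ℂ) := by push_cast; ring
          _ = 1 := by rw [this]; norm_num
      refine ⟨(s:ℂ) • (x + c • y), smul_ne_zero (by exact_mod_cast hspos.ne') hu0, ?_⟩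
      rw [q_smul, h1, Complex.star_def, Complex.conj_ofReal]
      calc z + w = ((s:ℂ)^2 * (1 + (μ:ℂ))) * (z+w) := by rw [hs2, one_mul]
        _ = _ := by ring
  · rintro z ⟨x, hx, rfl⟩ c hc
    refine ⟨(Real.sqrt c : ℂ) • x, ?_, ?_⟩
    · exact smul_ne_zero (by exact_mod_cast (Real.sqrt_pos.mpr hc).ne') hx
    · rw [q_smul]
      have : star ((Real.sqrt c : ℝ) : ℂ) = ((Real.sqrt c : ℝ) : ℂ) := by
        simp [Complex.star_def, Complex.conj_ofReal]
      rw [this, ← Complex.ofReal_mul, Real.mul_self_sqrt hc.le]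

end
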